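/- Let a : H × H → ℝ be a bounded coercive bilinear form on a Hilbert space H with coercivity constant α and boundedness constant C, let f ∈ H*, let u ∈ H solve a(u,v) = f(v) for all v ∈ H, and let u_h ∈ V solve the projected problem a(u_h,v) = f(v) for all v in a closed subspace V. Then ‖u - u_h‖ ≤ (C/α) · inf_{v ∈ V} ‖u - v‖. -/

import Mathlib

theorem cea_lemma
    {H : Type*} [NormedAddCommGroup H] [InnerProductSpace ℝ H] [CompleteSpace H]
    (a : H →ₗ[ℝ] H →ₗ[ℝ] ℝ) (C α : ℝ) (hα : 0 < α)
    (hbd : ∀ u v : H, |a u v| ≤ C * ‖u‖ * ‖v‖)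
    (hcoer : ∀ u : H, α * ‖u‖ ^ 2 ≤ a u u)
    (f : H →L[ℝ] ℝ)
    (V : Submodule ℝ H) (hVc : IsClosed (V : Set H))
    (u : H) (hu : ∀ v : H, a u v = f v)
    (uh : V) (huh : ∀ v : V, a (uh : H) (v : H) = f (v : H)) :
    ‖u - (uh : H)‖ ≤ (C / α) * ⨅ v : V, ‖u - (v : H)‖ := by
  by_cases htriv : ∀ x : H, x = 0
  · have h1 : u - (uh : H) = 0 := htriv _
    have h2 : (⨅ v : V, ‖u - (v : H)‖) = 0 := by
      have : ∀ v : V, ‖u - (v : H)‖ = 0 := fun v => by rw [htriv (u - (v : H)), norm_zero]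
      simp only [this]
      exact ciInf_const
    rw [h1, h2, norm_zero, mul_zero]
  · push_neg at htriv
    obtain ⟨x, hx⟩ := htriv
    have hx' : 0 < ‖x‖ := norm_pos_iff.mpr hx
    have hCα : α ≤ C := by
      have h1 := hcoer x
      have h2 := hbd x x
      nlinarith [le_abs_self (a x x), mul_pos hx' hx', sq_abs ‖x‖]
    have hC : 0 < C := lt_of_lt_of_le hα hCα
    set e := u - (uh : H) with he
    have horth : ∀ v : V, a e (v : H) = 0 := by
      intro v
      have : a u (v : H) = a (uh : H) (v : H) := by rw [hu, huh]
      simp [he, this]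
    have hkey : ∀ v : V, ‖e‖ ≤ (C / α) * ‖u - (v : H)‖ := by
      intro v
      by_cases hne : ‖e‖ = 0
      · rw [hne]
        positivity
      · have hne' : 0 < ‖e‖ := lt_of_le_of_ne (norm_nonneg e) (Ne.symm hne)
        have h1 : α * ‖e‖ ^ 2 ≤ a e e := hcoer e
        have h2 : a e e = a e (u - (v : H)) := by
          have hdecomp : a e e = a e (u - (v : H)) + a e ((v : H) - (uh : H)) := by
            have he2 : e = (u - (v : H)) + ((v : H) - (uh : H)) := by rw [he]; abel
            conv_lhs => rw [he2]
            rw [map_add]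
            congr 1 <;> rw [he2]
          rw [hdecomp, horth ⟨(v : H) - (uh : H), sub_mem v.2 uh.2⟩]
          simp
        have h3 : a e (u - (v : H)) ≤ C * ‖e‖ * ‖u - (v : H)‖ :=
          le_trans (le_abs_self _) (hbd e (u - (v : H)))
        have h4 : α * ‖e‖ ^ 2 ≤ C * ‖e‖ * ‖u - (v : H)‖ := by
          rw [h2] at h1; linarith
        rw [div_mul_eq_mul_div, le_div_iff₀ hα]
        nlinarith
    have hCα' : 0 < C / α := div_pos hC hα
    rw [mul_comm, ← div_le_iff₀ hCα']
    apply le_ciInf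
    intro v
    rw [div_le_iff₀ hCα', mul_comm]
    exact hkey v
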